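/- Let L/K be a finite Galois field extension with group Γ, G a group acting on L by a surjection σ : G → Γ with kernel H, and suppose Hom(H, L^×) carries the Γ-action (γ * χ)(h) = γ(χ(g_γ⁻¹ h g_γ)) for any lift g_γ of γ. Fix coset representatives (g_γ)_{γ∈Γ} with g_1 = 1, and define h_{γ₁,γ₂} ∈ H by g_{γ₁}g_{γ₂} = g_{γ₁γ₂} h_{γ₁,γ₂}. Then for every Γ-fixed χ ∈ Hom(H, L^×), the function f_χ(γ₁, γ₂) := (γ₁γ₂)(χ(h_{γ₁,γ₂}))⁻¹ is a 2-cocycle of Γ with values in L^×. -/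

import Mathlib

/-- Let `L/K` be a finite Galois field extension with group `Γ`, and
`G` a group acting on `L` by a surjection `σ : G → Γ` with kernel `H = ker σ`.  Fix coset
representatives `s : Γ → G` (with `σ (s γ) = γ` and `s 1 = 1`), and define
`h_{γ₁,γ₂} ∈ H` by `s γ₁ · s γ₂ = s (γ₁γ₂) · h_{γ₁,γ₂}`.  Let `χ : H → L^×` be a
`Γ`-fixed character, i.e. `χ(g h g⁻¹) = σ_g(χ(h))`.  Then
`f_χ(γ₁, γ₂) := ((γ₁γ₂)(χ(h_{γ₁,γ₂})))⁻¹` is a 2-cocycle of `Γ` with values in `L^×`: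
`γ₁(f(γ₂,γ₃)) · f(γ₁, γ₂γ₃) = f(γ₁γ₂, γ₃) · f(γ₁, γ₂)`. -/
theorem stmt15 {K L : Type*} [Field K] [Field L] [Algebra K L]
    [FiniteDimensional K L] [IsGalois K L]
    {G : Type*} [Group G] (σ : G →* (L ≃ₐ[K] L)) (hσ : Function.Surjective σ)
    (χ : σ.ker →* Lˣ)
    (hχ : ∀ (g h : G) (hh : h ∈ σ.ker) (hgh : g * h * g⁻¹ ∈ σ.ker),
      ((χ ⟨g * h * g⁻¹, hgh⟩ : Lˣ) : L) = σ g ((χ ⟨h, hh⟩ : Lˣ) : L))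
    (s : (L ≃ₐ[K] L) → G) (hs : ∀ γ, σ (s γ) = γ) (hs1 : s 1 = 1)
    (f : (L ≃ₐ[K] L) → (L ≃ₐ[K] L) → Lˣ)
    (hf : ∀ (γ₁ γ₂ : L ≃ₐ[K] L)
        (hmem : (s (γ₁ * γ₂))⁻¹ * (s γ₁ * s γ₂) ∈ σ.ker),
      ((f γ₁ γ₂ : Lˣ) : L)
        = ((γ₁ * γ₂) ((χ ⟨(s (γ₁ * γ₂))⁻¹ * (s γ₁ * s γ₂), hmem⟩ : Lˣ) : L))⁻¹) :
    ∀ γ₁ γ₂ γ₃ : L ≃ₐ[K] L,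
      γ₁ ((f γ₂ γ₃ : Lˣ) : L) * ((f γ₁ (γ₂ * γ₃) : Lˣ) : L)
        = ((f (γ₁ * γ₂) γ₃ : Lˣ) : L) * ((f γ₁ γ₂ : Lˣ) : L) := by
  intro γ₁ γ₂ γ₃
  have hmem : ∀ a b : (L ≃ₐ[K] L), (s (a * b))⁻¹ * (s a * s b) ∈ σ.ker := by
    intro a b
    simp [MonoidHom.mem_ker, map_mul, map_inv, hs]
  -- abbreviations for the h-elements (as subtype elements of the kernel)
  set h23 : σ.ker := ⟨(s (γ₂ * γ₃))⁻¹ * (s γ₂ * s γ₃), hmem γ₂ γ₃⟩ with hh23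
  set h123 : σ.ker := ⟨(s (γ₁ * (γ₂ * γ₃)))⁻¹ * (s γ₁ * s (γ₂ * γ₃)), hmem γ₁ (γ₂ * γ₃)⟩ with hh123
  set h12_3 : σ.ker := ⟨(s ((γ₁ * γ₂) * γ₃))⁻¹ * (s (γ₁ * γ₂) * s γ₃), hmem (γ₁ * γ₂) γ₃⟩ with hh12_3
  set h12 : σ.ker := ⟨(s (γ₁ * γ₂))⁻¹ * (s γ₁ * s γ₂), hmem γ₁ γ₂⟩ with hh12
  rw [hf γ₂ γ₃ (hmem γ₂ γ₃), hf γ₁ (γ₂ * γ₃) (hmem γ₁ (γ₂ * γ₃)),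
      hf (γ₁ * γ₂) γ₃ (hmem (γ₁ * γ₂) γ₃), hf γ₁ γ₂ (hmem γ₁ γ₂)]
  rw [map_inv₀, ← mul_inv, ← mul_inv]
  congr 1
  -- conjugation fact
  have hconjmem : (s γ₃)⁻¹ * ((h12 : G)) * ((s γ₃)⁻¹)⁻¹ ∈ σ.ker := by
    have := h12.2
    simp only [MonoidHom.mem_ker, map_mul, map_inv] at this ⊢
    simp [this]
  have hconj : ((χ ⟨(s γ₃)⁻¹ * (h12 : G) * ((s γ₃)⁻¹)⁻¹, hconjmem⟩ : Lˣ) : L)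
      = σ ((s γ₃)⁻¹) ((χ h12 : Lˣ) : L) := by
    simpa using hχ ((s γ₃)⁻¹) (h12 : G) h12.2 hconjmem
  -- group identity in the kernel
  have hgrp : h123 * h23 = h12_3 * ⟨(s γ₃)⁻¹ * (h12 : G) * ((s γ₃)⁻¹)⁻¹, hconjmem⟩ := by
    apply Subtype.ext
    push_cast [hh123, hh23, hh12_3, hh12]
    rw [show γ₁ * (γ₂ * γ₃) = (γ₁ * γ₂) * γ₃ from (mul_assoc γ₁ γ₂ γ₃).symm]
    group
  have hχgrp : ((χ h123 : Lˣ) : L) * ((χ h23 : Lˣ) : L)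
      = ((χ h12_3 : Lˣ) : L) * σ ((s γ₃)⁻¹) ((χ h12 : Lˣ) : L) := by
    rw [← hconj]
    have := congrArg (fun x => ((χ x : Lˣ) : L)) hgrp
    simpa [map_mul] using this
  -- now relate applications of automorphisms
  have e1 : γ₁ (((γ₂ * γ₃)) ((χ h23 : Lˣ) : L)) = (γ₁ * (γ₂ * γ₃)) ((χ h23 : Lˣ) : L) := rfl
  have e2 : ∀ x : L, ((γ₁ * γ₂) * γ₃) (σ ((s γ₃)⁻¹) x) = (γ₁ * γ₂) x := by
    intro x
    simp [map_inv, hs, AlgEquiv.mul_apply]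
  calc γ₁ (((γ₂ * γ₃)) ((χ h23 : Lˣ) : L)) * ((γ₁ * (γ₂ * γ₃)) ((χ h123 : Lˣ) : L))
      = (γ₁ * (γ₂ * γ₃)) (((χ h123 : Lˣ) : L) * ((χ h23 : Lˣ) : L)) := by
        rw [e1, ← map_mul]; ring_nf
    _ = ((γ₁ * γ₂) * γ₃) (((χ h12_3 : Lˣ) : L) * σ ((s γ₃)⁻¹) ((χ h12 : Lˣ) : L)) := by
        rw [hχgrp, show γ₁ * (γ₂ * γ₃) = (γ₁ * γ₂) * γ₃ from (mul_assoc γ₁ γ₂ γ₃).symm]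
    _ = ((γ₁ * γ₂) * γ₃) ((χ h12_3 : Lˣ) : L) * ((γ₁ * γ₂)) ((χ h12 : Lˣ) : L) := by
        rw [map_mul, e2]
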